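/- Let h : [1,R] → (0,∞) be nondecreasing and right-continuous, let ν be its distributional derivative (a nonnegative measure on [1,R]). Then ∫_{[1,R]} s²/h(s)² dν(s) ≤ 2 ∫_1^R s/h(s) ds − R²/h(R) + 1/h(1). -/

import Mathlib

open MeasureTheory Set Function


lemma sublevel_bound (h : StieltjesFunction ℝ) {x y : ℝ} (u : ℝ) :
    h.measure {s | s ∈ Ioc x y ∧ h s ≤ u}
      ≤ ENNReal.ofReal (min (h y - h x) (u - h x)) := by
  set S := {s | s ∈ Ioc x y ∧ h s ≤ u} with hS
  rcases Set.eq_empty_or_nonempty S with hE | hne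
  · simp [hE]
  have hbdd : BddAbove S := ⟨y, fun s hs => hs.1.2⟩
  set τ := sSup S with hτ
  have hub : ∀ s ∈ S, s ≤ τ := fun s hs => le_csSup hbdd hs
  have hmin : ENNReal.ofReal (min (h y - h x) (u - h x))
      = min (ENNReal.ofReal (h y - h x)) (ENNReal.ofReal (u - h x)) :=
    Monotone.map_min (fun _ _ hab => ENNReal.ofReal_le_ofReal hab)
  rw [hmin]
  refine le_min ?_ ?_
  · rw [← h.measure_Ioc]
    exact measure_mono fun s hs => hs.1
  by_cases hmem : τ ∈ S
  · calc h.measure S ≤ h.measure (Ioc x τ) :=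
          measure_mono fun s hs => ⟨hs.1.1, hub s hs⟩
      _ = ENNReal.ofReal (h τ - h x) := h.measure_Ioc x τ
      _ ≤ _ := ENNReal.ofReal_le_ofReal (by linarith [hmem.2])
  · have hsub : S ⊆ Ioo x τ := fun s hs =>
      ⟨hs.1.1, lt_of_le_of_ne (hub s hs) (fun he => hmem (he ▸ hs))⟩
    have hll : leftLim h τ ≤ u := by
      obtain ⟨s₀, hs₀⟩ := hne
      have hs₀τ : s₀ < τ := hsub hs₀ |>.2
      rw [h.mono.leftLim_eq_sSup]
      refine csSup_le ⟨h s₀, ⟨s₀, hs₀τ, rfl⟩⟩ ?_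
      rintro v ⟨s', hs', rfl⟩
      obtain ⟨s'', hs'', hlt⟩ := exists_lt_of_lt_csSup ⟨s₀, hs₀⟩ hs'
      exact (h.mono hlt.le).trans hs''.2
    calc h.measure S ≤ h.measure (Ioo x τ) := measure_mono hsub
      _ = ENNReal.ofReal (leftLim h τ - h x) := h.measure_Ioo
      _ ≤ _ := ENNReal.ofReal_le_ofReal (by linarith)


lemma calc_integral {a b : ℝ} (ha : 0 < a) (hab : a ≤ b) :
    ∫⁻ t in Ioi (0:ℝ), ENNReal.ofReal (min (b - a) (t⁻¹ - a)) * ENNReal.ofReal (2 * t)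
      ≤ ENNReal.ofReal (a⁻¹ - b⁻¹) := by
  have hb : 0 < b := ha.trans_le hab
  have hainv : 0 < a⁻¹ := inv_pos.mpr ha
  have hbinv : 0 < b⁻¹ := inv_pos.mpr hb
  have hinvle : b⁻¹ ≤ a⁻¹ := inv_anti₀ ha hab
  set ψ : ℝ → ℝ := fun t => 2 * t * min (b - a) (t⁻¹ - a) with hψ
  set χ : ℝ → ℝ := (Ioc (0:ℝ) a⁻¹).indicator ψ with hχ
  have hψ_mble : Measurable ψ :=
    (measurable_const.mul measurable_id).mul
      (measurable_const.min (measurable_inv.sub measurable_const))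
  have hχ_nn : ∀ t, 0 ≤ χ t := by
    intro t
    rcases em (t ∈ Ioc (0:ℝ) a⁻¹) with ht | ht
    · rw [hχ, indicator_of_mem ht]
      have h1 : (0:ℝ) < t := ht.1
      have h2 : a ≤ t⁻¹ := (le_inv_comm₀ ha h1).mpr ht.2
      have hm : (0:ℝ) ≤ min (b - a) (t⁻¹ - a) := le_min (by linarith) (by linarith)
      have : (0:ℝ) ≤ 2 * t := by positivity
      exact mul_nonneg this hm
    · rw [hχ, indicator_of_notMem ht]
  have hpt : ∀ t ∈ Ioi (0:ℝ),
      ENNReal.ofReal (min (b - a) (t⁻¹ - a)) * ENNReal.ofReal (2 * t)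
        = ENNReal.ofReal (χ t) := by
    intro t ht
    have ht' : (0:ℝ) < t := ht
    rcases le_or_gt t a⁻¹ with hta | hta
    · rw [hχ, indicator_of_mem (mem_Ioc.mpr ⟨ht', hta⟩), hψ]
      rw [mul_comm, ← ENNReal.ofReal_mul (by positivity : (0:ℝ) ≤ 2*t)]
    · rw [hχ, indicator_of_notMem (by simp [mem_Ioc, hta.not_ge])]
      have h2 : t⁻¹ < a := (inv_lt_comm₀ ht' ha).mpr hta
      have hm : min (b - a) (t⁻¹ - a) ≤ 0 := (min_le_right _ _).trans (by linarith)
      simp [ENNReal.ofReal_eq_zero.mpr hm]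
  rw [setLIntegral_congr_fun measurableSet_Ioi hpt]
  have hSfin : volume (Ioc (0:ℝ) a⁻¹) ≠ ⊤ := measure_Ioc_lt_top.ne
  have hInt : IntegrableOn ψ (Ioc (0:ℝ) a⁻¹) volume := by
    apply Measure.integrableOn_of_bounded (M := 2 * a⁻¹ * (b - a)) hSfin
      hψ_mble.aestronglyMeasurable
    · refine (ae_restrict_iff' measurableSet_Ioc).mpr (Filter.Eventually.of_forall ?_)
      intro t ht
      have h1 : (0:ℝ) < t := ht.1
      have h2 : a ≤ t⁻¹ := (le_inv_comm₀ ha h1).mpr ht.2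
      have hm0 : (0:ℝ) ≤ min (b - a) (t⁻¹ - a) := le_min (by linarith) (by linarith)
      have hψnn : 0 ≤ ψ t := mul_nonneg (by positivity) hm0
      rw [Real.norm_eq_abs, abs_of_nonneg hψnn, hψ]
      have hmle : min (b - a) (t⁻¹ - a) ≤ b - a := min_le_left _ _
      have h2t : 2 * t ≤ 2 * a⁻¹ := by linarith [ht.2]
      calc 2 * t * min (b - a) (t⁻¹ - a) ≤ 2 * a⁻¹ * min (b - a) (t⁻¹ - a) :=
            mul_le_mul_of_nonneg_right h2t hm0
        _ ≤ 2 * a⁻¹ * (b - a) := mul_le_mul_of_nonneg_left hmle (by positivity)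
  have hχ_int : Integrable χ volume := by
    rw [hχ, integrable_indicator_iff measurableSet_Ioc]
    exact hInt
  have step1 : ∫⁻ t in Ioi (0:ℝ), ENNReal.ofReal (χ t) ≤ ∫⁻ t, ENNReal.ofReal (χ t) :=
    setLIntegral_le_lintegral _ _
  have step2 : ∫⁻ t, ENNReal.ofReal (χ t) = ENNReal.ofReal (∫ t, χ t) :=
    (ofReal_integral_eq_lintegral_ofReal hχ_int
      (Filter.Eventually.of_forall hχ_nn)).symm
  -- compute the integral
  have i1 : IntervalIntegrable ψ volume 0 b⁻¹ := by
    rw [intervalIntegrable_iff_integrableOn_Ioc_of_le hbinv.le]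
    exact hInt.mono_set (Ioc_subset_Ioc_right hinvle)
  have i2 : IntervalIntegrable ψ volume b⁻¹ a⁻¹ := by
    rw [intervalIntegrable_iff_integrableOn_Ioc_of_le hinvle]
    exact hInt.mono_set (Ioc_subset_Ioc_left hbinv.le)
  have hval : ∫ t, χ t = a⁻¹ - b⁻¹ := by
    rw [hχ, integral_indicator measurableSet_Ioc,
      ← intervalIntegral.integral_of_le hainv.le,
      ← intervalIntegral.integral_add_adjacent_intervals i1 i2]
    have e1 : ∫ t in (0:ℝ)..b⁻¹, ψ t = ∫ t in (0:ℝ)..b⁻¹, 2 * (b - a) * t := by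
      apply intervalIntegral.integral_congr
      intro t ht
      rw [uIcc_of_le hbinv.le] at ht
      rcases eq_or_lt_of_le ht.1 with h0 | h0
      · rw [hψ]; simp [← h0]
      · have h2 : b ≤ t⁻¹ := (le_inv_comm₀ hb h0).mpr ht.2
        rw [hψ]
        simp only
        rw [min_eq_left (by linarith)]
        ring
    have e2 : ∫ t in b⁻¹..a⁻¹, ψ t = ∫ t in b⁻¹..a⁻¹, (2 - 2 * a * t) := by
      apply intervalIntegral.integral_congr
      intro t ht
      rw [uIcc_of_le hinvle] at ht
      have h0 : (0:ℝ) < t := hbinv.trans_le ht.1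
      have h2 : t⁻¹ ≤ b := (inv_le_comm₀ h0 hb).mpr ht.1
      rw [hψ]
      simp only
      rw [min_eq_right (by linarith)]
      field_simp
    rw [e1, e2, intervalIntegral.integral_const_mul, integral_id,
      intervalIntegral.integral_sub intervalIntegrable_const
        (by apply Continuous.intervalIntegrable; continuity),
      intervalIntegral.integral_const, intervalIntegral.integral_const_mul, integral_id]
    have hbne : b ≠ 0 := hb.ne'
    have hane : a ≠ 0 := ha.ne'
    field_simp
    simp only [smul_eq_mul]
    field_simp
    ring
  calc ∫⁻ t in Ioi (0:ℝ), ENNReal.ofReal (χ t) ≤ ∫⁻ t, ENNReal.ofReal (χ t) := step1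
    _ = ENNReal.ofReal (∫ t, χ t) := step2
    _ = ENNReal.ofReal (a⁻¹ - b⁻¹) := by rw [hval]


lemma lemA (h : StieltjesFunction ℝ) {x y : ℝ} (hx : 0 < h x) (hxy : x ≤ y) :
    ∫⁻ s in Ioc x y, ENNReal.ofReal ((h s)⁻¹ ^ 2) ∂h.measure
      ≤ ENNReal.ofReal ((h x)⁻¹ - (h y)⁻¹) := by
  set μ := h.measure.restrict (Ioc x y) with hμ
  set f : ℝ → ℝ := fun s => (h s)⁻¹ with hf
  have hmble : Measurable (h : ℝ → ℝ) := h.mono.measurable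
  have f_mble : AEMeasurable f μ := (hmble.inv).aemeasurable
  have f_nn : 0 ≤ᵐ[μ] f := by
    rw [hμ]
    filter_upwards [ae_restrict_mem measurableSet_Ioc] with s hs
    have : 0 < h s := hx.trans_le (h.mono hs.1.le)
    positivity
  have g_intble : ∀ t > (0:ℝ), IntervalIntegrable (fun t => 2 * t) volume 0 t :=
    fun t _ => (continuous_const.mul continuous_id).intervalIntegrable 0 t
  have g_nn : ∀ᵐ t ∂(volume.restrict (Ioi (0:ℝ))), 0 ≤ 2 * t := by
    filter_upwards [ae_restrict_mem measurableSet_Ioi] with t ht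
    have : (0:ℝ) < t := ht
    linarith
  have key := lintegral_comp_eq_lintegral_meas_le_mul μ f_nn f_mble g_intble g_nn
  have lhs_eq : ∀ ω, ENNReal.ofReal (∫ t in (0:ℝ)..f ω, 2 * t)
      = ENNReal.ofReal (f ω ^ 2) := by
    intro ω
    congr 1
    rw [intervalIntegral.integral_const_mul, integral_id]
    ring
  simp_rw [lhs_eq] at key
  have : ∫⁻ s in Ioc x y, ENNReal.ofReal ((h s)⁻¹ ^ 2) ∂h.measure
      = ∫⁻ ω, ENNReal.ofReal (f ω ^ 2) ∂μ := rfl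
  rw [this, key]
  have bound : ∀ t ∈ Ioi (0:ℝ), μ {a | t ≤ f a} * ENNReal.ofReal (2 * t)
      ≤ ENNReal.ofReal (min (h y - h x) (t⁻¹ - h x)) * ENNReal.ofReal (2 * t) := by
    intro t ht
    have ht' : (0:ℝ) < t := ht
    refine mul_le_mul_left ?_ _
    rw [hμ, Measure.restrict_apply (t := {a | t ≤ f a}) (measurableSet_le measurable_const hmble.inv)]
    refine le_trans (measure_mono ?_) (sublevel_bound h t⁻¹)
    rintro a ⟨hta, haIoc⟩
    have hha : 0 < h a := hx.trans_le (h.mono haIoc.1.le)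
    exact ⟨haIoc, (le_inv_comm₀ ht' hha).mp hta⟩
  calc ∫⁻ t in Ioi 0, μ {a | t ≤ f a} * ENNReal.ofReal (2 * t)
      ≤ ∫⁻ t in Ioi 0, ENNReal.ofReal (min (h y - h x) (t⁻¹ - h x))
          * ENNReal.ofReal (2 * t) := by
        refine setLIntegral_mono' measurableSet_Ioi bound
    _ ≤ ENNReal.ofReal ((h x)⁻¹ - (h y)⁻¹) := calc_integral hx (h.mono hxy)


/-- Let `h : [1,R] → (0,∞)` be nondecreasing and right-continuous (formalized as
a Stieltjes function, positive at `1`), and let `ν = h.measure` be its distributional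
derivative, a nonnegative measure. Then
`∫_{(1,R]} s²/h(s)² dν(s) ≤ 2 ∫_1^R s/h(s) ds − R²/h(R) + 1/h(1)`. -/
theorem stmt_7 (R : ℝ) (hR : 1 ≤ R) (h : StieltjesFunction ℝ) (hpos : 0 < h 1) :
    ∫⁻ s in Set.Ioc (1:ℝ) R, ENNReal.ofReal (s ^ 2 / (h s) ^ 2) ∂h.measure
      ≤ ENNReal.ofReal (2 * (∫ s in (1:ℝ)..R, s / h s) - R ^ 2 / h R + 1 / h 1) := by
  have hmble : Measurable (h : ℝ → ℝ) := h.mono.measurable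
  set W : ℝ → ENNReal := fun s => ENNReal.ofReal ((h s)⁻¹ ^ 2) with hW
  have hWm : Measurable W := (hmble.inv.pow_const 2).ennreal_ofReal
  set gE : ℝ → ENNReal := fun t => ENNReal.ofReal (2 * t) with hgE
  have hgEm : Measurable gE := (measurable_const.mul measurable_id).ennreal_ofReal
  set I : ℝ → ENNReal := fun s => ∫⁻ t in Ioc (1:ℝ) R, (Ioo 1 s).indicator gE t with hI
  -- pointwise rewriting of the integrand
  have hIs : ∀ s ∈ Ioc (1:ℝ) R, I s = ENNReal.ofReal (s ^ 2 - 1) := by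
    intro s hs
    have hs1 : (1:ℝ) < s := hs.1
    rw [hI]
    simp only
    rw [lintegral_indicator measurableSet_Ioo, Measure.restrict_restrict measurableSet_Ioo,
      inter_eq_left.mpr (Ioo_subset_Ioo_right hs.2 |>.trans Ioo_subset_Ioc_self)]
    rw [hgE]
    rw [← ofReal_integral_eq_lintegral_ofReal (f := fun t : ℝ => 2 * t)
      (((continuous_const.mul continuous_id).integrableOn_Ioc.mono_set Ioo_subset_Ioc_self :
        IntegrableOn (fun t : ℝ => 2 * t) (Ioo 1 s) volume))
      (by filter_upwards [ae_restrict_mem measurableSet_Ioo] with t ht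
          have : (1:ℝ) < t := ht.1
          simp only [Pi.zero_apply]
          linarith)]
    congr 1
    rw [← integral_Ioc_eq_integral_Ioo, ← intervalIntegral.integral_of_le hs1.le,
      intervalIntegral.integral_const_mul, integral_id]
    ring
  have step_congr : ∀ s ∈ Ioc (1:ℝ) R,
      ENNReal.ofReal (s ^ 2 / (h s) ^ 2) = W s + I s * W s := by
    intro s hs
    have hs1 : (1:ℝ) < s := hs.1
    have hhs : 0 < h s := hpos.trans_le (h.mono hs.1.le)
    have e1 : ENNReal.ofReal (s ^ 2 / (h s) ^ 2) = ENNReal.ofReal (s ^ 2) * W s := by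
      rw [hW]
      simp only
      rw [div_eq_mul_inv, ← inv_pow, ENNReal.ofReal_mul (by positivity)]
    have e2 : ENNReal.ofReal (s ^ 2) = 1 + ENNReal.ofReal (s ^ 2 - 1) := by
      rw [← ENNReal.ofReal_one, ← ENNReal.ofReal_add zero_le_one (by nlinarith)]
      norm_num
    rw [e1, e2, hIs s hs, add_mul, one_mul]
  rw [setLIntegral_congr_fun measurableSet_Ioc step_congr]
  rw [lintegral_add_left hWm]
  -- Term 2: Fubini
  have hsetm : MeasurableSet {p : ℝ × ℝ | 1 < p.2 ∧ p.2 < p.1} :=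
    (measurableSet_lt measurable_const measurable_snd).inter
      (measurableSet_lt measurable_snd measurable_fst)
  have hFm : AEMeasurable (uncurry fun s t => (Ioo (1:ℝ) s).indicator gE t * W s)
      ((h.measure.restrict (Ioc (1:ℝ) R)).prod (volume.restrict (Ioc (1:ℝ) R))) := by
    have : (uncurry fun s t => (Ioo (1:ℝ) s).indicator gE t * W s)
        = fun p : ℝ × ℝ => ({p : ℝ × ℝ | 1 < p.2 ∧ p.2 < p.1}.indicator
            (fun q => gE q.2) p) * W p.1 := by
      funext p
      simp only [uncurry, indicator_apply, mem_Ioo, mem_setOf_eq]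
    rw [this]
    exact (((hgEm.comp measurable_snd).indicator hsetm).mul
      (hWm.comp measurable_fst)).aemeasurable
  have hswap : ∫⁻ s in Ioc (1:ℝ) R, I s * W s ∂h.measure
      = ∫⁻ t in Ioc (1:ℝ) R, ∫⁻ s in Ioc (1:ℝ) R,
          (Ioo (1:ℝ) s).indicator gE t * W s ∂h.measure := by
    have e : ∀ s, I s * W s
        = ∫⁻ t in Ioc (1:ℝ) R, (Ioo (1:ℝ) s).indicator gE t * W s := by
      intro s
      rw [hI]
      exact (lintegral_mul_const (W s) (hgEm.indicator measurableSet_Ioo)).symm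
    simp_rw [e]
    exact lintegral_lintegral_swap hFm
  have inner_bound : ∀ t ∈ Ioc (1:ℝ) R,
      ∫⁻ s in Ioc (1:ℝ) R, (Ioo (1:ℝ) s).indicator gE t * W s ∂h.measure
        ≤ gE t * ENNReal.ofReal ((h t)⁻¹ - (h R)⁻¹) := by
    intro t ht
    have hht : 0 < h t := hpos.trans_le (h.mono ht.1.le)
    have e : ∀ s ∈ Ioc (1:ℝ) R, (Ioo (1:ℝ) s).indicator gE t * W s
        = (Ioi t).indicator (fun s => gE t * W s) s := by
      intro s _
      rcases lt_or_ge t s with hts | hts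
      · rw [indicator_of_mem (mem_Ioo.mpr ⟨ht.1, hts⟩), indicator_of_mem (mem_Ioi.mpr hts)]
      · rw [indicator_of_notMem (by simp [mem_Ioo, hts.not_gt]),
          indicator_of_notMem (by simp [mem_Ioi, hts.not_gt]), zero_mul]
    rw [setLIntegral_congr_fun measurableSet_Ioc e,
      lintegral_indicator measurableSet_Ioi, Measure.restrict_restrict measurableSet_Ioi,
      inter_comm, Ioc_inter_Ioi, sup_eq_right.mpr ht.1.le,
      lintegral_const_mul _ hWm]
    exact mul_le_mul_right (lemA h hht ht.2) _
  -- integrability facts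
  have J_int : IntegrableOn (fun t => t * (h t)⁻¹) (Ioc (1:ℝ) R) volume := by
    apply Measure.integrableOn_of_bounded (M := R * (h 1)⁻¹) measure_Ioc_lt_top.ne
      (measurable_id.mul hmble.inv).aestronglyMeasurable
    filter_upwards [ae_restrict_mem measurableSet_Ioc] with t ht
    have hht : 0 < h t := hpos.trans_le (h.mono ht.1.le)
    have h1 : (h t)⁻¹ ≤ (h 1)⁻¹ := inv_anti₀ hpos (h.mono ht.1.le)
    have h2 : (0:ℝ) < t := lt_trans one_pos ht.1
    rw [Real.norm_eq_abs, Pi.mul_apply, Pi.inv_apply, id_eq, abs_of_nonneg (mul_pos h2 (inv_pos.mpr hht)).le]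
    exact mul_le_mul ht.2 h1 (inv_pos.mpr hht).le (by linarith)
  have lin_int : IntegrableOn (fun t : ℝ => 2 * (h R)⁻¹ * t) (Ioc (1:ℝ) R) volume :=
    (continuous_const.mul continuous_id).integrableOn_Ioc
  have q_int : IntegrableOn (fun t => 2 * t * ((h t)⁻¹ - (h R)⁻¹)) (Ioc (1:ℝ) R) volume := by
    have e' : (fun t : ℝ => 2 * t * ((h t)⁻¹ - (h R)⁻¹))
        = fun t => 2 * (t * (h t)⁻¹) - 2 * (h R)⁻¹ * t := funext fun t => by ring
    rw [e']
    exact (J_int.const_mul 2).sub lin_int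
  have q_nn : 0 ≤ᵐ[volume.restrict (Ioc (1:ℝ) R)]
      fun t => 2 * t * ((h t)⁻¹ - (h R)⁻¹) := by
    filter_upwards [ae_restrict_mem measurableSet_Ioc] with t ht
    have hht : 0 < h t := hpos.trans_le (h.mono ht.1.le)
    have h1 : (h R)⁻¹ ≤ (h t)⁻¹ := inv_anti₀ hht (h.mono ht.2)
    have h2 : (0:ℝ) < t := lt_trans one_pos ht.1
    have : (0:ℝ) ≤ (h t)⁻¹ - (h R)⁻¹ := by linarith
    positivity
  have T2 : ∫⁻ t in Ioc (1:ℝ) R, gE t * ENNReal.ofReal ((h t)⁻¹ - (h R)⁻¹)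
      = ENNReal.ofReal (∫ t in Ioc (1:ℝ) R, 2 * t * ((h t)⁻¹ - (h R)⁻¹)) := by
    rw [ofReal_integral_eq_lintegral_ofReal q_int q_nn]
    apply setLIntegral_congr_fun measurableSet_Ioc
    refine fun t ht => ?_
    rw [hgE]
    simp only
    rw [← ENNReal.ofReal_mul (by linarith [ht.1] : (0:ℝ) ≤ 2 * t)]
  -- compute the real integral
  have hid : ∫ t in Ioc (1:ℝ) R, t = (R ^ 2 - 1) / 2 := by
    rw [← intervalIntegral.integral_of_le hR, integral_id]
    norm_num
  set J := ∫ t in Ioc (1:ℝ) R, t * (h t)⁻¹ with hJ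
  have q_eq : ∫ t in Ioc (1:ℝ) R, 2 * t * ((h t)⁻¹ - (h R)⁻¹)
      = 2 * J - (R ^ 2 - 1) * (h R)⁻¹ := by
    have e' : (fun t : ℝ => 2 * t * ((h t)⁻¹ - (h R)⁻¹))
        = fun t => 2 * (t * (h t)⁻¹) - 2 * (h R)⁻¹ * t := funext fun t => by ring
    rw [e', integral_sub (J_int.const_mul 2) lin_int, integral_const_mul,
      integral_const_mul, hid, ← hJ]
    ring
  have hJ_eq : ∫ s in (1:ℝ)..R, s / h s = J := by
    rw [intervalIntegral.integral_of_le hR, hJ]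
    simp_rw [div_eq_mul_inv]
  -- put everything together
  have q_nonneg : 0 ≤ ∫ t in Ioc (1:ℝ) R, 2 * t * ((h t)⁻¹ - (h R)⁻¹) :=
    integral_nonneg_of_ae q_nn
  have h1R : (0:ℝ) ≤ (h 1)⁻¹ - (h R)⁻¹ := by
    have := inv_anti₀ hpos (h.mono hR)
    linarith
  calc (∫⁻ s in Ioc (1:ℝ) R, W s ∂h.measure)
        + ∫⁻ s in Ioc (1:ℝ) R, I s * W s ∂h.measure
      ≤ ENNReal.ofReal ((h 1)⁻¹ - (h R)⁻¹)
          + ENNReal.ofReal (∫ t in Ioc (1:ℝ) R, 2 * t * ((h t)⁻¹ - (h R)⁻¹)) := by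
        refine add_le_add (lemA h hpos hR) ?_
        rw [hswap, ← T2]
        exact setLIntegral_mono' measurableSet_Ioc inner_bound
    _ ≤ ENNReal.ofReal (2 * (∫ s in (1:ℝ)..R, s / h s) - R ^ 2 / h R + 1 / h 1) := by
        rw [← ENNReal.ofReal_add h1R q_nonneg]
        apply ENNReal.ofReal_le_ofReal
        rw [q_eq, hJ_eq, one_div, div_eq_mul_inv]
        ring_nf
        linarith
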